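/- arXiv:1701.00062 — 2 statements merged into one kernel-verified Lean document; each statement's English description precedes it below -/
import Mathlib

section
/- (λ-preserving symmetries of the SBM.) Let ι be a finite index set with at least two elements, let π and ω be permutations of ι, and let γ : ι → {0,1}. Define, for weights α in the simplex (α_i ≥ 0, ∑_i α_i = 1) and probability vectors p ∈ [0,1]^ι, the transformation α'_i = α_{π(i)} and p'_i = γ_i + (1 − 2γ_i)·p_{ω(i)}. If for every α in the simplex and every p ∈ [0,1]^ι one has h(∑_i α'_i p'_i) − ∑_i α'_i h(p'_i) = h(∑_i α_i p_i) − ∑_i α_i h(p_i), then necessarily ω = π and γ is constant, i.e., γ_i = γ for all i with γ ∈ {0,1}. Conversely, if ω = π and γ is constant then the transformation preserves h(∑_i α_i p_i) − ∑_i α_i h(p_i) for all such (α,p). -/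
open Finset

/-- Binary entropy function `h(p) = -(1-p)·log(1-p) - p·log(p)`.
(Note `Real.log 0 = 0` in Mathlib, implementing the convention `0·log 0 = 0`.) -/
noncomputable def binH (p : ℝ) : ℝ := -(1 - p) * Real.log (1 - p) - p * Real.log p

/-- Average normalized log-likelihood ratio `⟨L(α,p)⟩ = h(∑ α_i p_i) − ∑ α_i h(p_i)`. -/
noncomputable def avgL {ι : Type*} [Fintype ι] (α p : ι → ℝ) : ℝ :=
  binH (∑ i, α i * p i) - ∑ i, α i * binH (p i)

lemma binH_zero : binH 0 = 0 := by simp [binH]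
lemma binH_one : binH 1 = 0 := by simp [binH]
lemma binH_one_sub (p : ℝ) : binH (1 - p) = binH p := by
  simp only [binH, sub_sub_cancel]; ring
lemma binH_half : binH (1/2) = Real.log 2 := by
  have h : Real.log ((1:ℝ)/2) = -Real.log 2 := by
    rw [show ((1:ℝ)/2) = 2⁻¹ by norm_num, Real.log_inv]
  simp only [binH]; rw [show (1:ℝ) - 1/2 = 1/2 by norm_num, h]; ring

lemma key16 : 4 * Real.log 2 < 3 * Real.log 3 := by
  have h : Real.log (2^4 : ℝ) < Real.log (3^3 : ℝ) := by
    apply Real.log_lt_log (by norm_num) (by norm_num)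
  rw [Real.log_pow, Real.log_pow] at h
  push_cast at h
  linarith

lemma key7 : 7 * Real.log 7 < 4 * Real.log 2 + 3 * Real.log 3 + 5 * Real.log 5 := by
  have h : Real.log (7^7 : ℝ) < Real.log ((2^4) * (3^3) * (5^5) : ℝ) := by
    apply Real.log_lt_log (by norm_num) (by norm_num)
  rw [Real.log_pow, Real.log_mul (by norm_num) (by norm_num),
    Real.log_mul (by norm_num) (by norm_num), Real.log_pow, Real.log_pow, Real.log_pow] at h
  push_cast at h
  linarith

lemma binH_quarter : binH (1/4) = 2*Real.log 2 - (3/4)*Real.log 3 := by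
  have h4 : Real.log (4:ℝ) = 2 * Real.log 2 := by
    rw [show (4:ℝ) = 2^2 by norm_num, Real.log_pow]; push_cast; ring
  have h34 : Real.log ((3:ℝ)/4) = Real.log 3 - 2 * Real.log 2 := by
    rw [Real.log_div (by norm_num) (by norm_num), h4]
  have h14 : Real.log ((1:ℝ)/4) = -(2 * Real.log 2) := by
    rw [show ((1:ℝ)/4) = 4⁻¹ by norm_num, Real.log_inv, h4]
  simp only [binH]
  rw [show (1:ℝ) - 1/4 = 3/4 by norm_num, h34, h14]; ring

lemma binH_eighth : binH (1/8) = 3*Real.log 2 - (7/8)*Real.log 7 := by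
  have h8 : Real.log (8:ℝ) = 3 * Real.log 2 := by
    rw [show (8:ℝ) = 2^3 by norm_num, Real.log_pow]; push_cast; ring
  have h78 : Real.log ((7:ℝ)/8) = Real.log 7 - 3 * Real.log 2 := by
    rw [Real.log_div (by norm_num) (by norm_num), h8]
  have h18 : Real.log ((1:ℝ)/8) = -(3 * Real.log 2) := by
    rw [show ((1:ℝ)/8) = 8⁻¹ by norm_num, Real.log_inv, h8]
  simp only [binH]
  rw [show (1:ℝ) - 1/8 = 7/8 by norm_num, h78, h18]; ring

lemma binH_three_eighth : binH (3/8) = 3*Real.log 2 - (5/8)*Real.log 5 - (3/8)*Real.log 3 := by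
  have h8 : Real.log (8:ℝ) = 3 * Real.log 2 := by
    rw [show (8:ℝ) = 2^3 by norm_num, Real.log_pow]; push_cast; ring
  have h58 : Real.log ((5:ℝ)/8) = Real.log 5 - 3 * Real.log 2 := by
    rw [Real.log_div (by norm_num) (by norm_num), h8]
  have h38 : Real.log ((3:ℝ)/8) = Real.log 3 - 3 * Real.log 2 := by
    rw [Real.log_div (by norm_num) (by norm_num), h8]
  simp only [binH]
  rw [show (1:ℝ) - 3/8 = 5/8 by norm_num, h58, h38]; ring

lemma keyA : binH (1/2) ≠ binH (1/4) := by
  rw [binH_half, binH_quarter]; intro h; have := key16; linarith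

lemma keyB : binH (3/8) - binH (1/8) ≠ (1/2) * Real.log 2 := by
  rw [binH_three_eighth, binH_eighth]; intro h; have := key7; linarith

lemma converse_dir {ι : Type*} [Fintype ι] (π : Equiv.Perm ι) (c : ℝ) (hc : c = 0 ∨ c = 1)
    (α p : ι → ℝ) (hsum : ∑ i, α i = 1) :
    avgL (fun i => α (π i)) (fun i => c + (1 - 2*c) * p (π i)) = avgL α p := by
  have h1 : ∑ i, α (π i) * p (π i) = ∑ i, α i * p i :=
    Equiv.sum_comp π (fun i => α i * p i)
  have h2 : ∑ i, α (π i) * binH (p (π i)) = ∑ i, α i * binH (p i) :=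
    Equiv.sum_comp π (fun i => α i * binH (p i))
  have hs : ∑ i, α (π i) = 1 := by
    rw [Equiv.sum_comp π α]; exact hsum
  rcases hc with rfl | rfl
  · simp only [avgL]; norm_num [h1, h2]
  · simp only [avgL]
    have e1 : ∀ i, (1:ℝ) + (1 - 2*1) * p (π i) = 1 - p (π i) := by intro i; ring
    simp only [e1, binH_one_sub]
    have e2 : ∑ i, α (π i) * (1 - p (π i)) = 1 - ∑ i, α i * p i := by
      rw [Finset.sum_congr rfl (fun i _ => mul_sub (α (π i)) 1 (p (π i)))]
      rw [Finset.sum_sub_distrib]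
      simp only [mul_one, hs, h1]
    rw [e2, binH_one_sub, h2]

lemma step_A {ι : Type*} [Fintype ι] (π ω : Equiv.Perm ι) (γ : ι → ℝ)
    (hγ : ∀ i, γ i = 0 ∨ γ i = 1)
    (H : ∀ α : ι → ℝ, (∀ i, 0 ≤ α i) → ∑ i, α i = 1 →
      ∀ p : ι → ℝ, (∀ i, p i ∈ Set.Icc (0 : ℝ) 1) →
        avgL (fun i => α (π i)) (fun i => γ i + (1 - 2 * γ i) * p (ω i)) = avgL α p)
    (i₁ i₂ : ι) : γ i₁ = γ i₂ := by
  classical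
  rcases eq_or_ne i₁ i₂ with rfl | h12
  · rfl
  have hπ : π i₁ ≠ π i₂ := fun h => h12 (π.injective h)
  set α : ι → ℝ := fun x => (if x = π i₁ then (1/2:ℝ) else 0) + (if x = π i₂ then (1/2:ℝ) else 0)
    with hαdef
  have hα0 : ∀ x, 0 ≤ α x := by
    intro x; simp only [hαdef]; split_ifs <;> norm_num
  have hα1 : ∑ x, α x = 1 := by
    simp only [hαdef]
    rw [Finset.sum_add_distrib, Finset.sum_ite_eq', Finset.sum_ite_eq']
    simp only [Finset.mem_univ, if_true]; norm_num
  have hp : ∀ i, (fun _ : ι => (1/4:ℝ)) i ∈ Set.Icc (0:ℝ) 1 := by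
    intro i; constructor <;> norm_num
  have E := H α hα0 hα1 _ hp
  simp only [avgL, hαdef, EmbeddingLike.apply_eq_iff_eq, add_mul, ite_mul, zero_mul,
    Finset.sum_add_distrib, Finset.sum_ite_eq', Finset.mem_univ, if_true] at E
  by_contra hne
  rcases hγ i₁ with h1 | h1 <;> rcases hγ i₂ with h2 | h2 <;> rw [h1, h2] at E hne
  · exact hne rfl
  · rw [show (0:ℝ) + (1 - 2*0) * (1/4) = 1/4 by norm_num,
      show (1:ℝ) + (1 - 2*1) * (1/4) = 1 - 1/4 by norm_num, binH_one_sub] at E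
    norm_num at E
    exact keyA (by linarith)
  · rw [show (0:ℝ) + (1 - 2*0) * (1/4) = 1/4 by norm_num,
      show (1:ℝ) + (1 - 2*1) * (1/4) = 1 - 1/4 by norm_num, binH_one_sub] at E
    norm_num at E
    exact keyA (by linarith)
  · exact hne rfl

lemma step_B {ι : Type*} [Fintype ι] (π ω : Equiv.Perm ι) (c : ℝ) (hc : c = 0 ∨ c = 1)
    (H : ∀ α : ι → ℝ, (∀ i, 0 ≤ α i) → ∑ i, α i = 1 →
      ∀ p : ι → ℝ, (∀ i, p i ∈ Set.Icc (0 : ℝ) 1) →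
        avgL (fun i => α (π i)) (fun i => c + (1 - 2 * c) * p (ω i)) = avgL α p) :
    ω = π := by
  classical
  ext x
  by_contra hne
  set m := ω x with hm
  set n := π x with hn
  have hmn : m ≠ n := hne
  have hπm : π.symm m ≠ x := by
    intro h
    exact hmn (by rw [← h] at hn; rw [hn, Equiv.apply_symm_apply])
  set α : ι → ℝ := fun y => (if y = n then (3/4:ℝ) else 0) + (if y = m then (1/4:ℝ) else 0)
    with hαdef
  have hα0 : ∀ y, 0 ≤ α y := by
    intro y; simp only [hαdef]; split_ifs <;> norm_num
  have hα1 : ∑ y, α y = 1 := by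
    simp only [hαdef]
    rw [Finset.sum_add_distrib, Finset.sum_ite_eq', Finset.sum_ite_eq']
    simp only [Finset.mem_univ, if_true]
    norm_num
  set p : ι → ℝ := fun y => if y = m then (1/2:ℝ) else 0 with hpdef
  have hp : ∀ i, p i ∈ Set.Icc (0:ℝ) 1 := by
    intro i; simp only [hpdef]; split_ifs <;> constructor <;> norm_num
  have E := H α hα0 hα1 p hp
  have hωeq : ∀ i : ι, (ω i = m) = (i = x) := by
    intro i
    simp only [hm, EmbeddingLike.apply_eq_iff_eq]
  have hπn : ∀ i : ι, (π i = n) = (i = x) := by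
    intro i
    simp only [hn, EmbeddingLike.apply_eq_iff_eq]
  have hπmm : ∀ i : ι, (π i = m) = (i = π.symm m) := by
    intro i
    simp only [eq_iff_iff]
    exact ⟨fun h => by rw [← h, Equiv.symm_apply_apply], fun h => by rw [h, Equiv.apply_symm_apply]⟩
  simp only [avgL, hαdef, hpdef, hωeq, hπn, hπmm, add_mul, ite_mul, zero_mul, mul_ite, mul_zero,
    Finset.sum_add_distrib, Finset.sum_ite_eq', Finset.mem_univ, if_true,
    if_neg hπm, if_neg hmn.symm, if_neg hmn, apply_ite binH, binH_zero, binH_half] at E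
  rcases hc with rfl | rfl
  · norm_num [binH_zero] at E
    rw [binH_half] at E
    exact keyB (by linarith)
  · norm_num [binH_one] at E
    rw [binH_half, show (5:ℝ)/8 = 1 - 3/8 by norm_num, binH_one_sub] at E
    exact keyB (by linarith)

/-- λ-preserving symmetries of the SBM: the transformation
`α'_i = α_{π(i)}`, `p'_i = γ_i + (1 − 2γ_i) p_{ω(i)}` (with `γ_i ∈ {0,1}`) preserves the
average normalized log-likelihood ratio for every admissible `(α, p)` if and only if
`ω = π` and `γ` is constant. -/
theorem lambda_preserving_symmetries
    {ι : Type*} [Fintype ι] (hcard : 1 < Fintype.card ι)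
    (π ω : Equiv.Perm ι) (γ : ι → ℝ) (hγ : ∀ i, γ i = 0 ∨ γ i = 1) :
    (∀ α : ι → ℝ, (∀ i, 0 ≤ α i) → ∑ i, α i = 1 →
      ∀ p : ι → ℝ, (∀ i, p i ∈ Set.Icc (0 : ℝ) 1) →
        avgL (fun i => α (π i)) (fun i => γ i + (1 - 2 * γ i) * p (ω i)) = avgL α p)
    ↔ (ω = π ∧ ∃ c : ℝ, (c = 0 ∨ c = 1) ∧ ∀ i, γ i = c) := by
  constructor
  · intro H
    have hne : Nonempty ι := Fintype.card_pos_iff.mp (by omega)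
    obtain ⟨i₀⟩ := hne
    have hgc : ∀ i, γ i = γ i₀ := fun i => step_A π ω γ hγ H i i₀
    have hc := hγ i₀
    refine ⟨?_, γ i₀, hc, hgc⟩
    apply step_B π ω (γ i₀) hc
    intro α hα0 hα1 p hp
    have E := H α hα0 hα1 p hp
    simp only [hgc] at E
    exact E
  · rintro ⟨rfl, c, hc, hgc⟩
    intro α hα0 hα1 p hp
    simp only [hgc]
    exact converse_dir _ c hc α p hα1
end

section
/- Let ι be a nonempty finite index set, let α : ι → ℝ be nonnegative weights with ∑_{i∈ι} α_i = 1, and let λ ≥ 0. Then the sublevel set { p ∈ [0,1]^ι : h(∑_i α_i p_i) − ∑_i α_i h(p_i) ≤ λ } is a convex subset of ℝ^ι. -/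
open Finset

noncomputable def klTerm (x y : ℝ) : ℝ := x * Real.log x - x * Real.log y

lemma klTerm_eq {x y : ℝ} (hx : 0 ≤ x) (hy : 0 < y) :
    klTerm x y = x * Real.log (x / y) := by
  rcases hx.eq_or_lt with h | h
  · simp [klTerm, ← h]
  · rw [klTerm, Real.log_div h.ne' hy.ne']; ring

lemma klTerm_smul {c a b : ℝ} (hc : 0 < c) (ha : 0 ≤ a) (hb : 0 < b) :
    klTerm (c * a) (c * b) = c * klTerm a b := by
  rcases ha.eq_or_lt with h | h
  · simp [klTerm, ← h]
  · rw [klTerm, klTerm, Real.log_mul hc.ne' h.ne', Real.log_mul hc.ne' hb.ne']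
    ring

lemma klTerm_convex {a b c d t s : ℝ} (ha : 0 ≤ a) (hb : 0 ≤ b) (hc : 0 ≤ c)
    (hd : 0 ≤ d) (hac : c = 0 → a = 0) (hbd : d = 0 → b = 0)
    (ht : 0 ≤ t) (hs : 0 ≤ s) (hts : t + s = 1) :
    klTerm (t * a + s * b) (t * c + s * d) ≤ t * klTerm a c + s * klTerm b d := by
  rcases hc.eq_or_lt with hc0 | hcpos
  · -- c = 0, so a = 0
    have ha0 : a = 0 := hac hc0.symm
    subst ha0; rw [← hc0]
    rcases hd.eq_or_lt with hd0 | hdpos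
    · have hb0 : b = 0 := hbd hd0.symm
      subst hb0; rw [← hd0]; simp [klTerm]
    · rcases hs.eq_or_lt with hs0 | hspos
      · rw [← hs0]; simp [klTerm]
      · simp only [mul_zero, zero_add]
        rw [klTerm_smul hspos hb hdpos]
        simp [klTerm]
  · rcases hd.eq_or_lt with hd0 | hdpos
    · -- d = 0, b = 0
      have hb0 : b = 0 := hbd hd0.symm
      subst hb0; rw [← hd0]
      rcases ht.eq_or_lt with ht0 | htpos
      · rw [← ht0]; simp [klTerm]
      · simp only [mul_zero, add_zero]
        rw [klTerm_smul htpos ha hcpos]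
        simp [klTerm]
    · -- main case: c > 0, d > 0
      have hy : 0 < t * c + s * d := by
        rcases ht.eq_or_lt with ht0 | htpos
        · have hs1 : s = 1 := by linarith
          rw [← ht0, hs1]; simpa using hdpos
        · have h1 : 0 < t * c := mul_pos htpos hcpos
          nlinarith [mul_nonneg hs hd]
      set y := t * c + s * d with hy_def
      have hw1 : 0 ≤ t * c / y := by positivity
      have hw2 : 0 ≤ s * d / y := by positivity
      have hwsum : t * c / y + s * d / y = 1 := by field_simp; exact hy_def.symm
      have hu1 : a / c ∈ Set.Ici (0 : ℝ) := by
        simp only [Set.mem_Ici]; positivity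
      have hu2 : b / d ∈ Set.Ici (0 : ℝ) := by
        simp only [Set.mem_Ici]; positivity
      have key := Real.convexOn_mul_log.2 hu1 hu2 hw1 hw2 hwsum
      simp only [smul_eq_mul] at key
      have harg : t * c / y * (a / c) + s * d / y * (b / d) = (t * a + s * b) / y := by
        field_simp
      rw [harg] at key
      have key2 := mul_le_mul_of_nonneg_left key hy.le
      have hL : y * ((t * a + s * b) / y * Real.log ((t * a + s * b) / y))
          = klTerm (t * a + s * b) y := by
        rw [klTerm_eq (by positivity) hy]
        field_simp
      have hR : y * (t * c / y * (a / c * Real.log (a / c)) +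
          s * d / y * (b / d * Real.log (b / d)))
          = t * klTerm a c + s * klTerm b d := by
        rw [klTerm_eq ha hcpos, klTerm_eq hb hdpos]
        field_simp
      rw [hL, hR] at key2
      exact key2

lemma avgL_eq {ι : Type*} [Fintype ι] (α p : ι → ℝ) (hsum : ∑ i, α i = 1) :
    avgL α p = ∑ i, α i * (klTerm (p i) (∑ j, α j * p j)
      + klTerm (1 - p i) (1 - ∑ j, α j * p j)) := by
  set ρ := ∑ j, α j * p j with hρ
  have h1 : ∑ i, α i * (1 - p i) = 1 - ρ := by
    simp only [mul_sub, mul_one, Finset.sum_sub_distrib, hsum, hρ]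
  have key : ∀ i, α i * (klTerm (p i) ρ + klTerm (1 - p i) (1 - ρ))
      = -(α i * binH (p i)) - (α i * p i) * Real.log ρ
        - (α i * (1 - p i)) * Real.log (1 - ρ) := by
    intro i; unfold klTerm binH; ring
  rw [Finset.sum_congr rfl (fun i _ => key i)]
  rw [Finset.sum_sub_distrib, Finset.sum_sub_distrib, Finset.sum_neg_distrib,
    ← Finset.sum_mul, ← Finset.sum_mul, h1]
  unfold avgL binH
  rw [← hρ]
  ring

/-- The sublevel set `{ p ∈ [0,1]^ι : L(α,p) ≤ λ }` of the average detectability is a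
convex subset of `ℝ^ι`. -/
theorem avgL_sublevel_set_convex
    {ι : Type*} [Fintype ι] [Nonempty ι]
    (α : ι → ℝ) (hα : ∀ i, 0 ≤ α i) (hsum : ∑ i, α i = 1)
    (lam : ℝ) (hlam : 0 ≤ lam) :
    Convex ℝ {p : ι → ℝ | (∀ i, p i ∈ Set.Icc (0 : ℝ) 1) ∧ avgL α p ≤ lam} := by
  rintro p ⟨hpmem, hpL⟩ q ⟨hqmem, hqL⟩ t s ht hs hts
  have hm_apply : ∀ i, (t • p + s • q) i = t * p i + s * q i := by
    intro i; simp [smul_eq_mul]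
  constructor
  · intro i
    rw [hm_apply i]
    exact (convex_Icc (0:ℝ) 1) (hpmem i) (hqmem i) ht hs hts
  · set ρp := ∑ j, α j * p j with hρp
    set ρq := ∑ j, α j * q j with hρq
    have hρp_nonneg : 0 ≤ ρp :=
      Finset.sum_nonneg fun j _ => mul_nonneg (hα j) (hpmem j).1
    have hρq_nonneg : 0 ≤ ρq :=
      Finset.sum_nonneg fun j _ => mul_nonneg (hα j) (hqmem j).1
    have h1p : ∑ j, α j * (1 - p j) = 1 - ρp := by
      simp only [mul_sub, mul_one, Finset.sum_sub_distrib, hsum, hρp]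
    have h1q : ∑ j, α j * (1 - q j) = 1 - ρq := by
      simp only [mul_sub, mul_one, Finset.sum_sub_distrib, hsum, hρq]
    have h1p_nonneg : 0 ≤ 1 - ρp := by
      rw [← h1p]
      exact Finset.sum_nonneg fun j _ => mul_nonneg (hα j) (by linarith [(hpmem j).2])
    have h1q_nonneg : 0 ≤ 1 - ρq := by
      rw [← h1q]
      exact Finset.sum_nonneg fun j _ => mul_nonneg (hα j) (by linarith [(hqmem j).2])
    have hρm : ∑ j, α j * (t • p + s • q) j = t * ρp + s * ρq := by
      simp only [hm_apply, mul_add, Finset.sum_add_distrib, hρp, hρq, Finset.mul_sum]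
      congr 1 <;> (apply Finset.sum_congr rfl; intro j _; ring)
    rw [avgL_eq α _ hsum]
    rw [avgL_eq α p hsum, ← hρp] at hpL
    rw [avgL_eq α q hsum, ← hρq] at hqL
    calc ∑ i, α i * (klTerm ((t • p + s • q) i) (∑ j, α j * (t • p + s • q) j)
            + klTerm (1 - (t • p + s • q) i) (1 - ∑ j, α j * (t • p + s • q) j))
        ≤ ∑ i, (t * (α i * (klTerm (p i) ρp + klTerm (1 - p i) (1 - ρp)))
            + s * (α i * (klTerm (q i) ρq + klTerm (1 - q i) (1 - ρq)))) := by
          apply Finset.sum_le_sum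
          intro i _
          rw [hρm, hm_apply i]
          rcases (hα i).eq_or_lt with hαi0 | hαi
          · rw [← hαi0]; simp
          · have hkey1 : klTerm (t * p i + s * q i) (t * ρp + s * ρq)
                ≤ t * klTerm (p i) ρp + s * klTerm (q i) ρq := by
              apply klTerm_convex (hpmem i).1 (hqmem i).1 hρp_nonneg hρq_nonneg
                ?_ ?_ ht hs hts
              · intro h0
                have := (Finset.sum_eq_zero_iff_of_nonneg
                  (fun j _ => mul_nonneg (hα j) (hpmem j).1)).1 (hρp ▸ h0) i (Finset.mem_univ i)
                exact (mul_eq_zero.1 this).resolve_left hαi.ne'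
              · intro h0
                have := (Finset.sum_eq_zero_iff_of_nonneg
                  (fun j _ => mul_nonneg (hα j) (hqmem j).1)).1 (hρq ▸ h0) i (Finset.mem_univ i)
                exact (mul_eq_zero.1 this).resolve_left hαi.ne'
            have hkey2 : klTerm (1 - (t * p i + s * q i)) (1 - (t * ρp + s * ρq))
                ≤ t * klTerm (1 - p i) (1 - ρp) + s * klTerm (1 - q i) (1 - ρq) := by
              have e1 : 1 - (t * p i + s * q i) = t * (1 - p i) + s * (1 - q i) := by
                linarith
              have e2 : 1 - (t * ρp + s * ρq) = t * (1 - ρp) + s * (1 - ρq) := by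
                linarith
              rw [e1, e2]
              apply klTerm_convex (by linarith [(hpmem i).2]) (by linarith [(hqmem i).2])
                h1p_nonneg h1q_nonneg ?_ ?_ ht hs hts
              · intro h0
                have hz : ∑ j, α j * (1 - p j) = 0 := h1p.trans h0
                have := (Finset.sum_eq_zero_iff_of_nonneg
                  (fun j _ => mul_nonneg (hα j) (by linarith [(hpmem j).2] : (0:ℝ) ≤ 1 - p j))).1
                  hz i (Finset.mem_univ i)
                exact (mul_eq_zero.1 this).resolve_left hαi.ne'
              · intro h0
                have hz : ∑ j, α j * (1 - q j) = 0 := h1q.trans h0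
                have := (Finset.sum_eq_zero_iff_of_nonneg
                  (fun j _ => mul_nonneg (hα j) (by linarith [(hqmem j).2] : (0:ℝ) ≤ 1 - q j))).1
                  hz i (Finset.mem_univ i)
                exact (mul_eq_zero.1 this).resolve_left hαi.ne'
            nlinarith [add_le_add hkey1 hkey2]
      _ = t * ∑ i, α i * (klTerm (p i) ρp + klTerm (1 - p i) (1 - ρp))
          + s * ∑ i, α i * (klTerm (q i) ρq + klTerm (1 - q i) (1 - ρq)) := by
          rw [Finset.sum_add_distrib, ← Finset.mul_sum, ← Finset.mul_sum]
      _ ≤ t * lam + s * lam := by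
          apply add_le_add (mul_le_mul_of_nonneg_left hpL ht) (mul_le_mul_of_nonneg_left hqL hs)
      _ = lam := by rw [← add_mul, hts, one_mul]
end
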